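/- Fix r_1 < ... < r_k with d = gcd(r_1,...,r_k), and n > r_k² with M_n primitive. Then the delta set of M_n equals {d}: for every a ∈ M_n whose length set L(a) has at least two elements, every pair of consecutive elements of L(a) differs by exactly d. -/

import Mathlib

open Finset

/-- Length of a factorization. -/
def vlen {m : ℕ} (z : Fin m → ℕ) : ℕ := ∑ i, z i

/-- Factorization homomorphism of `M_n = ⟨n, n+r_1, ..., n+r_k⟩`. -/
def piM (k n : ℕ) (r : Fin (k + 1) → ℕ) (z : Fin (k + 2) → ℕ) : ℕ :=
  z 0 * n + ∑ i : Fin (k + 1), z i.succ * (n + r i)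

/-- Two factorizations of `β` lie in the same connected component of the factorization
graph `∇_β`: there is a path of factorizations of `β`, consecutive ones sharing a
common positive coordinate. -/
def SameComp {m : ℕ} (π : (Fin m → ℕ) → ℕ) (β : ℕ) :
    (Fin m → ℕ) → (Fin m → ℕ) → Prop :=
  Relation.ReflTransGen (fun a b => π a = β ∧ π b = β ∧ ∃ i, 0 < a i ∧ 0 < b i)

/-- `β` is a Betti element: its factorization graph is disconnected. -/
def IsBetti {m : ℕ} (π : (Fin m → ℕ) → ℕ) (β : ℕ) : Prop :=
  ∃ z z', π z = β ∧ π z' = β ∧ ¬ SameComp π β z z'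

/-- The map `Φ_n` on pairs of factorizations. -/
def Phi (k : ℕ) (p : (Fin (k + 2) → ℕ) × (Fin (k + 2) → ℕ)) :
    (Fin (k + 2) → ℕ) × (Fin (k + 2) → ℕ) :=
  if vlen p.2 < vlen p.1 then
    (p.1 + (vlen p.1 - vlen p.2) • Pi.single (0 : Fin (k + 2)) 1,
     p.2 + (vlen p.1 - vlen p.2) • Pi.single (Fin.last (k + 1)) 1)
  else if vlen p.1 < vlen p.2 then
    (p.1 + (vlen p.2 - vlen p.1) • Pi.single (Fin.last (k + 1)) 1,
     p.2 + (vlen p.2 - vlen p.1) • Pi.single (0 : Fin (k + 2)) 1)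
  else p

/-- The congruence generated by a set of relations `ρ`. -/
inductive CongGen {m : ℕ} (ρ : Set ((Fin m → ℕ) × (Fin m → ℕ))) :
    (Fin m → ℕ) → (Fin m → ℕ) → Prop
  | of {z z'} : (z, z') ∈ ρ → CongGen ρ z z'
  | refl (z) : CongGen ρ z z
  | symm {z z'} : CongGen ρ z z' → CongGen ρ z' z
  | trans {x y z} : CongGen ρ x y → CongGen ρ y z → CongGen ρ x z
  | add {z z'} (u) : CongGen ρ z z' → CongGen ρ (z + u) (z' + u)

/-- `ρ` is a presentation for the monoid with factorization homomorphism `π`. -/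
def IsPres {m : ℕ} (π : (Fin m → ℕ) → ℕ)
    (ρ : Set ((Fin m → ℕ) × (Fin m → ℕ))) : Prop :=
  (∀ p ∈ ρ, π p.1 = π p.2) ∧ ∀ z z', CongGen ρ z z' ↔ π z = π z'

/-- `ρ` is a minimal presentation. -/
def IsMinPres {m : ℕ} (π : (Fin m → ℕ) → ℕ)
    (ρ : Set ((Fin m → ℕ) × (Fin m → ℕ))) : Prop :=
  IsPres π ρ ∧ ∀ ρ' ⊆ ρ, IsPres π ρ' → ρ' = ρ

/-- Primitivity of `M_n`: the gcd of the generators is 1. -/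
def Primitive (k n : ℕ) (r : Fin (k + 1) → ℕ) : Prop :=
  Nat.gcd n (Finset.univ.gcd fun i : Fin (k + 1) => n + r i) = 1

/-- Distance between two factorizations. -/
def fdist {m : ℕ} (z z' : Fin m → ℕ) : ℕ :=
  max (∑ i, (z i - min (z i) (z' i))) (∑ i, (z' i - min (z i) (z' i)))

lemma gcd_bezout {ι : Type*} [DecidableEq ι] (s : Finset ι) (f : ι → ℕ) :
    ∃ u : ι → ℤ, ∑ i ∈ s, u i * (f i : ℤ) = ((s.gcd f : ℕ) : ℤ) := by
  induction s using Finset.induction_on with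
  | empty => exact ⟨0, by simp⟩
  | insert a s ha ih =>
    obtain ⟨u, hu⟩ := ih
    refine ⟨fun i => if i = a then Nat.gcdA (f a) (s.gcd f) else Nat.gcdB (f a) (s.gcd f) * u i, ?_⟩
    rw [Finset.sum_insert ha, Finset.gcd_insert]
    have h2 : ∑ i ∈ s, (if i = a then Nat.gcdA (f a) (s.gcd f) else Nat.gcdB (f a) (s.gcd f) * u i) * (f i : ℤ)
        = Nat.gcdB (f a) (s.gcd f) * ∑ i ∈ s, u i * (f i : ℤ) := by
      rw [Finset.mul_sum]
      refine Finset.sum_congr rfl fun i hi => ?_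
      rw [if_neg (by rintro rfl; exact ha hi)]
      ring
    rw [h2, hu]
    simp only [if_pos rfl]
    have h := Nat.gcd_eq_gcd_ab (f a) (s.gcd f)
    have h3 : (GCDMonoid.gcd (f a) (s.gcd f) : ℕ) = Nat.gcd (f a) (s.gcd f) := rfl
    rw [h3]
    push_cast [h]
    ring

lemma reach (k m : ℕ) (hm : 0 < m) (r : Fin (k+1) → ℕ) :
    ∀ T : ℕ, (Finset.univ.gcd r) ∣ T →
    ∃ e : Fin (k+1) → ℕ, ∑ i, e i ≤ m ∧ ((∑ i, e i * r i : ℕ) : ZMod m) = (T : ZMod m) := by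
  haveI : NeZero m := ⟨hm.ne'⟩
  set F : Finset (ZMod m) → Finset (ZMod m) :=
    fun s => s ∪ s.biUnion (fun x => Finset.image (fun i : Fin (k+1) => x + (r i : ZMod m)) Finset.univ) with hF
  set A : ℕ → Finset (ZMod m) := fun j => F^[j] {0} with hA
  have hAsucc : ∀ j, A (j+1) = F (A j) := fun j => Function.iterate_succ_apply' F j {0}
  have hsub : ∀ j, A j ⊆ A (j+1) := fun j => by rw [hAsucc]; exact Finset.subset_union_left
  have hstab : ∃ j ≤ m, A (j+1) = A j := by
    by_contra hc
    push_neg at hc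
    have hcard : ∀ j, j ≤ m + 1 → j ≤ (A j).card := by
      intro j
      induction j with
      | zero => intro _; exact Nat.zero_le _
      | succ j ih =>
        intro hj
        have h1 := ih (by omega)
        have h2 : (A j).card < (A (j+1)).card :=
          Finset.card_lt_card (Finset.ssubset_iff_subset_ne.2 ⟨hsub j, fun h => hc j (by omega) h.symm⟩)
        omega
    have h1 := hcard (m+1) le_rfl
    have hle : (A (m+1)).card ≤ m := by
      have h2 := Finset.card_le_univ (A (m+1))
      rwa [ZMod.card] at h2
    omega
  obtain ⟨j0, hj0, hstab0⟩ := hstab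
  have hstable : ∀ j, A (j0 + j) = A j0 := by
    intro j
    induction j with
    | zero => rfl
    | succ j ih => rw [show j0 + (j+1) = (j0+j)+1 from rfl, hAsucc, ih, ← hAsucc, hstab0]
  set B := A j0 with hB
  have hFB : F B = B := by rw [hB, ← hAsucc, hstab0]
  have hA0 : ∀ j, (0 : ZMod m) ∈ A j := by
    intro j
    induction j with
    | zero => simp [hA]
    | succ j ih => exact hsub j ih
  have hzero : (0 : ZMod m) ∈ B := hA0 j0
  have hclosed : ∀ x ∈ B, ∀ i : Fin (k+1), x + (r i : ZMod m) ∈ B := by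
    intro x hx i
    rw [← hFB]
    exact Finset.mem_union_right _ (Finset.mem_biUnion.2 ⟨x, hx, Finset.mem_image.2 ⟨i, Finset.mem_univ i, rfl⟩⟩)
  have hclosed' : ∀ x ∈ B, ∀ i : Fin (k+1), x - (r i : ZMod m) ∈ B := by
    intro x hx i
    have himg : Finset.image (fun y => y + (r i : ZMod m)) B ⊆ B := by
      intro y hy
      obtain ⟨z, hz, rfl⟩ := Finset.mem_image.1 hy
      exact hclosed z hz i
    have hcardeq : (Finset.image (fun y => y + (r i : ZMod m)) B).card = B.card :=
      Finset.card_image_of_injective _ (add_left_injective _)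
    have heq : Finset.image (fun y => y + (r i : ZMod m)) B = B :=
      Finset.eq_of_subset_of_card_le himg (le_of_eq hcardeq.symm)
    have hx2 : x ∈ Finset.image (fun y => y + (r i : ZMod m)) B := heq.symm ▸ hx
    obtain ⟨y, hy, hxy⟩ := Finset.mem_image.1 hx2
    have : x - (r i : ZMod m) = y := by rw [← hxy]; ring
    rwa [this]
  have hint : ∀ (t : ℤ) (i : Fin (k+1)), ∀ x ∈ B, x + ((t * (r i : ℤ) : ℤ) : ZMod m) ∈ B := by
    intro t i
    induction t using Int.induction_on with
    | zero => intro x hx; simpa using hx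
    | succ t ih =>
      intro x hx
      have h1 := hclosed _ (ih x hx) i
      have heq : x + (((t+1) * (r i : ℤ) : ℤ) : ZMod m) = (x + ((t * (r i : ℤ) : ℤ) : ZMod m)) + (r i : ZMod m) := by
        push_cast; ring
      rwa [heq]
    | pred t ih =>
      intro x hx
      have h1 := hclosed' _ (ih x hx) i
      have heq : x + (((-t-1) * (r i : ℤ) : ℤ) : ZMod m) = (x + ((((-t : ℤ)) * (r i : ℤ) : ℤ) : ZMod m)) - (r i : ZMod m) := by
        push_cast; ring
      rwa [heq]
  have hcomb : ∀ u : Fin (k+1) → ℤ, ((∑ i, u i * (r i : ℤ) : ℤ) : ZMod m) ∈ B := by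
    intro u
    have hs : ∀ s : Finset (Fin (k+1)), ((∑ i ∈ s, u i * (r i : ℤ) : ℤ) : ZMod m) ∈ B := by
      intro s
      induction s using Finset.induction_on with
      | empty => simpa using hzero
      | insert a s ha ih =>
        rw [Finset.sum_insert ha]
        have h1 := hint (u a) a _ ih
        have heq : ((u a * (r a : ℤ) + ∑ i ∈ s, u i * (r i : ℤ) : ℤ) : ZMod m)
            = ((∑ i ∈ s, u i * (r i : ℤ) : ℤ) : ZMod m) + ((u a * (r a : ℤ) : ℤ) : ZMod m) := by
          push_cast; ring
        rw [heq]; exact h1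
    exact hs Finset.univ
  have hextract : ∀ j, ∀ x ∈ A j, ∃ e : Fin (k+1) → ℕ, ∑ i, e i ≤ j ∧ ((∑ i, e i * r i : ℕ) : ZMod m) = x := by
    intro j
    induction j with
    | zero =>
      intro x hx
      have hx0 : x = 0 := by simpa [hA] using hx
      exact ⟨0, by simp, by simp [hx0]⟩
    | succ j ih =>
      intro x hx
      rw [hAsucc] at hx
      rcases Finset.mem_union.1 hx with h | h
      · obtain ⟨e, he1, he2⟩ := ih x h
        exact ⟨e, he1.trans (Nat.le_succ j), he2⟩
      · obtain ⟨y, hy, hxi⟩ := Finset.mem_biUnion.1 h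
        obtain ⟨i, _, rfl⟩ := Finset.mem_image.1 hxi
        obtain ⟨e, he1, he2⟩ := ih y hy
        refine ⟨fun j' => if j' = i then e j' + 1 else e j', ?_, ?_⟩
        · have hsum : ∑ j', (if j' = i then e j' + 1 else e j') = (∑ j', e j') + 1 := by
            have : ∀ j' : Fin (k+1), (if j' = i then e j' + 1 else e j') = e j' + (if j' = i then 1 else 0) := by
              intro j'; split <;> simp
            rw [Finset.sum_congr rfl (fun j' _ => this j'), Finset.sum_add_distrib, Finset.sum_ite_eq' Finset.univ i (fun _ => 1), if_pos (Finset.mem_univ i)]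
          rw [hsum]; omega
        · have hval : ∑ j', (if j' = i then e j' + 1 else e j') * r j' = (∑ j', e j' * r j') + r i := by
            have : ∀ j' : Fin (k+1), (if j' = i then e j' + 1 else e j') * r j' = e j' * r j' + (if j' = i then r j' else 0) := by
              intro j'; split <;> ring_nf <;> simp
            rw [Finset.sum_congr rfl (fun j' _ => this j'), Finset.sum_add_distrib, Finset.sum_ite_eq' Finset.univ i (fun j' => r j'), if_pos (Finset.mem_univ i)]
          rw [hval]
          push_cast at he2 ⊢
          rw [he2]
  intro T hT
  obtain ⟨t, rfl⟩ := hT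
  obtain ⟨u, hu⟩ := gcd_bezout Finset.univ r
  have hmem : ((Finset.univ.gcd r * t : ℕ) : ZMod m) ∈ B := by
    have h1 := hcomb (fun i => (t : ℤ) * u i)
    have heq : ((∑ i, ((t : ℤ) * u i) * (r i : ℤ) : ℤ) : ZMod m) = ((Finset.univ.gcd r * t : ℕ) : ZMod m) := by
      have h2 : (∑ i, ((t : ℤ) * u i) * (r i : ℤ) : ℤ) = t * ∑ i, u i * (r i : ℤ) := by
        rw [Finset.mul_sum]; congr 1; funext i; ring
      rw [h2, hu]
      push_cast; ring
    rwa [heq] at h1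
  have hBA : B ⊆ A m := by
    have h5 := hstable (m - j0)
    rw [show j0 + (m - j0) = m from by omega] at h5
    exact le_of_eq h5.symm
  obtain ⟨e, he1, he2⟩ := hextract m _ (hBA hmem)
  exact ⟨e, he1, he2⟩

lemma vlen_eq {k : ℕ} (z : Fin (k + 2) → ℕ) :
    vlen z = z 0 + ∑ i : Fin (k+1), z i.succ := by
  unfold vlen
  exact Fin.sum_univ_succ z

lemma piM_eq (k n : ℕ) (r : Fin (k+1) → ℕ) (z : Fin (k + 2) → ℕ) :
    piM k n r z = vlen z * n + ∑ i, z i.succ * r i := by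
  unfold piM
  rw [vlen_eq]
  have h1 : ∀ i : Fin (k+1), z i.succ * (n + r i) = z i.succ * n + z i.succ * r i :=
    fun i => Nat.mul_add _ _ _
  rw [Finset.sum_congr rfl (fun i _ => h1 i), Finset.sum_add_distrib, add_mul,
    ← Finset.sum_mul]
  ring

lemma len_iff (k n : ℕ) (r : Fin (k+1) → ℕ) (a ℓ : ℕ) :
    (∃ z, piM k n r z = a ∧ vlen z = ℓ) ↔
    ∃ c : Fin (k+1) → ℕ, (∑ i, c i) ≤ ℓ ∧ ℓ * n + ∑ i, c i * r i = a := by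
  constructor
  · rintro ⟨z, rfl, rfl⟩
    refine ⟨fun i => z i.succ, ?_, (piM_eq k n r z).symm⟩
    show ∑ i : Fin (k+1), z i.succ ≤ vlen z
    rw [vlen_eq]
    omega
  · rintro ⟨c, hle, heq⟩
    obtain ⟨t, ht⟩ : ∃ t, ℓ = (∑ i, c i) + t := ⟨ℓ - ∑ i, c i, by omega⟩
    have hcons0 : (Fin.cons t c : Fin (k+2) → ℕ) 0 = t := rfl
    have hconss : ∀ i : Fin (k+1), (Fin.cons t c : Fin (k+2) → ℕ) i.succ = c i :=
      fun i => Fin.cons_succ _ _ _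
    have hs1 : ∑ i : Fin (k+1), (Fin.cons t c : Fin (k+2) → ℕ) i.succ = ∑ i, c i :=
      Finset.sum_congr rfl (fun i _ => hconss i)
    have hs2 : ∑ i : Fin (k+1), (Fin.cons t c : Fin (k+2) → ℕ) i.succ * r i
        = ∑ i, c i * r i :=
      Finset.sum_congr rfl (fun i _ => by rw [hconss i])
    have hv : vlen (Fin.cons t c : Fin (k+2) → ℕ) = ℓ := by
      rw [vlen_eq, hcons0, hs1]
      omega
    refine ⟨Fin.cons t c, ?_, hv⟩
    rw [piM_eq, hv, hs2, heq]

/-- For `n > r_k²` with `M_n` primitive, the delta set of `M_n` is `{d}` where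
`d = gcd(r_1,...,r_k)`. -/
theorem stmt13 (k n : ℕ) (r : Fin (k + 1) → ℕ) (hmono : StrictMono r) (hpos : 0 < r 0)
    (hn : r (Fin.last k) ^ 2 < n) (hprim : Primitive k n r) :
    {δ | ∃ a ℓ ℓ' : ℕ,
        (∃ z, piM k n r z = a ∧ vlen z = ℓ) ∧
        (∃ z, piM k n r z = a ∧ vlen z = ℓ') ∧
        ℓ < ℓ' ∧
        (∀ m', ℓ < m' → m' < ℓ' → ¬ ∃ z, piM k n r z = a ∧ vlen z = m') ∧
        δ = ℓ' - ℓ}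
      = {Finset.univ.gcd r} := by
  set d := Finset.univ.gcd r with hd
  set m := r (Fin.last k) with hmdef
  have hrm : ∀ i, r i ≤ m := fun i => hmono.monotone (Fin.le_last i)
  have hm_pos : 0 < m := lt_of_lt_of_le hpos (hrm 0)
  have hd_dvd : ∀ i, d ∣ r i := fun i => Finset.gcd_dvd (Finset.mem_univ i)
  have hd_pos : 0 < d := by
    rcases Nat.eq_zero_or_pos d with h | h
    · exfalso
      have h0 := hd_dvd 0
      rw [h] at h0
      rw [zero_dvd_iff] at h0
      omega
    · exact h
  have hn1 : m * m < n := by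
    rw [← pow_two]
    exact hn
  have hdm : d ≤ m := Nat.le_of_dvd hm_pos (hd_dvd (Fin.last k))
  have hdn : n ≤ d * n := Nat.le_mul_of_pos_left n hd_pos
  have hcop : Nat.Coprime d n := by
    have hg : Nat.gcd d n ∣ 1 := by
      rw [← hprim]
      apply Nat.dvd_gcd
      · exact Nat.gcd_dvd_right d n
      · apply Finset.dvd_gcd
        intro i _
        exact Nat.dvd_add (Nat.gcd_dvd_right d n) ((Nat.gcd_dvd_left d n).trans (hd_dvd i))
    exact Nat.dvd_one.mp hg
  -- any sum of the r's is divisible by d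
  have hdS : ∀ c : Fin (k+1) → ℕ, d ∣ ∑ i, c i * r i :=
    fun c => Finset.dvd_sum fun i _ => Dvd.dvd.mul_left (hd_dvd i) (c i)
  -- congruence of lengths
  have hcong : ∀ a ℓ₁ ℓ₂ : ℕ, ℓ₁ ≤ ℓ₂ →
      (∃ z, piM k n r z = a ∧ vlen z = ℓ₁) →
      (∃ z, piM k n r z = a ∧ vlen z = ℓ₂) → d ∣ ℓ₂ - ℓ₁ := by
    intro a ℓ₁ ℓ₂ hle h1 h2
    obtain ⟨c₁, hc₁, ha₁⟩ := (len_iff k n r a ℓ₁).1 h1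
    obtain ⟨c₂, hc₂, ha₂⟩ := (len_iff k n r a ℓ₂).1 h2
    set S₁ := ∑ i, c₁ i * r i with hS₁
    set S₂ := ∑ i, c₂ i * r i with hS₂
    have heq : ℓ₁ * n + S₁ = ℓ₂ * n + S₂ := by rw [ha₁, ha₂]
    have hmul : ℓ₁ * n ≤ ℓ₂ * n := Nat.mul_le_mul_right n hle
    have hsub : (ℓ₂ - ℓ₁) * n = S₁ - S₂ := by
      rw [Nat.sub_mul]
      omega
    have hdvd : d ∣ (ℓ₂ - ℓ₁) * n := by
      rw [hsub]
      exact Nat.dvd_sub (hdS c₁) (hdS c₂)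
    exact (Nat.Coprime.dvd_of_dvd_mul_right hcop hdvd)
  -- representation lemma
  have hrepr : ∀ T : ℕ, d ∣ T → d * n ≤ T →
      ∃ c : Fin (k+1) → ℕ, (∑ i, c i * r i = T) ∧ (∑ i, c i) * m ≤ m * m + T := by
    intro T hdT hnT
    obtain ⟨e, he1, he2⟩ := reach k m hm_pos r T hdT
    set E := ∑ i, e i * r i with hE
    have hEle : E ≤ m * m := by
      calc E ≤ ∑ i, e i * m := Finset.sum_le_sum (fun i _ => Nat.mul_le_mul_left _ (hrm i))
        _ = (∑ i, e i) * m := (Finset.sum_mul _ _ _).symm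
        _ ≤ m * m := Nat.mul_le_mul_right _ he1
    have hET : E ≤ T := le_trans hEle (le_trans (le_of_lt hn1) (le_trans hdn hnT))
    have hdvd : m ∣ T - E := by
      have h0 : ((T - E : ℕ) : ZMod m) = 0 := by
        rw [Nat.cast_sub hET, he2, sub_self]
      exact (ZMod.natCast_eq_zero_iff _ _).1 h0
    obtain ⟨j, hj⟩ := hdvd
    refine ⟨fun i => e i + if i = Fin.last k then j else 0, ?_, ?_⟩
    · have hsplit : ∀ i : Fin (k+1),
          (e i + if i = Fin.last k then j else 0) * r i
            = e i * r i + (if i = Fin.last k then j * r i else 0) := by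
        intro i; split <;> ring
      rw [Finset.sum_congr rfl (fun i _ => hsplit i), Finset.sum_add_distrib]
      have hone : ∑ i : Fin (k+1), (if i = Fin.last k then j * r i else 0) = j * m := by
        rw [Finset.sum_ite_eq' Finset.univ (Fin.last k) (fun i => j * r i),
          if_pos (Finset.mem_univ _)]
      rw [hone, ← hE]
      have hcomm : j * m = m * j := Nat.mul_comm j m
      omega
    · have hsplit : ∀ i : Fin (k+1),
          (e i + if i = Fin.last k then j else 0) = e i + (if i = Fin.last k then j else 0) :=
        fun i => rfl
      rw [Finset.sum_add_distrib]
      have hone : ∑ i : Fin (k+1), (if i = Fin.last k then j else 0) = j := by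
        rw [Finset.sum_ite_eq' Finset.univ (Fin.last k) (fun _ => j),
          if_pos (Finset.mem_univ _)]
      rw [hone, add_mul]
      have h1 : (∑ i, e i) * m ≤ m * m := Nat.mul_le_mul_right _ he1
      have h2 : m * j = T - E := hj.symm
      have hcomm : j * m = m * j := Nat.mul_comm j m
      omega
  -- main set equality
  ext δ
  simp only [Set.mem_setOf_eq, Set.mem_singleton_iff]
  constructor
  · rintro ⟨a, ℓ, ℓ', h1, h2, hlt, hgap, rfl⟩
    have hdvdδ : d ∣ ℓ' - ℓ := hcong a ℓ ℓ' hlt.le h1 h2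
    by_contra hne
    -- then ℓ' - ℓ ≥ 2d
    obtain ⟨t, ht⟩ := hdvdδ
    have ht2 : 2 ≤ t := by
      rcases Nat.lt_or_ge t 2 with h | h
      · interval_cases t <;> omega
      · exact h
    have hδ2 : ℓ + 2 * d ≤ ℓ' := by
      have : d * 2 ≤ d * t := Nat.mul_le_mul_left d ht2
      omega
    obtain ⟨c, hcle, hca⟩ := (len_iff k n r a ℓ).1 h1
    obtain ⟨c', hcle', hca'⟩ := (len_iff k n r a ℓ').1 h2
    set S := ∑ i, c i * r i with hS
    have hSd : d ∣ S := hdS c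
    have hS2 : 2 * (d * n) + (∑ i, c' i * r i) ≤ S := by
      have heq : ℓ * n + S = ℓ' * n + ∑ i, c' i * r i := by rw [hca, hca']
      have hmul : (ℓ + 2 * d) * n ≤ ℓ' * n := Nat.mul_le_mul_right n hδ2
      rw [add_mul] at hmul
      have h3 : 2 * d * n = 2 * (d * n) := by ring
      omega
    set T := S - d * n with hT
    have hTd : d ∣ T := Nat.dvd_sub hSd ⟨n, rfl⟩
    have hTn : d * n ≤ T := by omega
    obtain ⟨c2, hc2v, hc2p⟩ := hrepr T hTd hTn
    have hSle : S ≤ (∑ i, c i) * m := by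
      calc S ≤ ∑ i, c i * m := Finset.sum_le_sum (fun i _ => Nat.mul_le_mul_left _ (hrm i))
        _ = (∑ i, c i) * m := (Finset.sum_mul _ _ _).symm
    have hmem : ∃ z, piM k n r z = a ∧ vlen z = ℓ + d := by
      rw [len_iff]
      refine ⟨c2, ?_, ?_⟩
      · have hlt2 : (∑ i, c2 i) * m < ℓ * m := by
          have h4 : (∑ i, c i) * m ≤ ℓ * m := Nat.mul_le_mul_right m hcle
          have h5 : m * m + T < d * n + T := by omega
          omega
        have := Nat.lt_of_mul_lt_mul_right (a := m) hlt2
        omega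
      · rw [hc2v, add_mul]
        omega
    exact hgap (ℓ + d) (by omega) (by omega) hmem
  · rintro rfl
    obtain ⟨c2, hc2v, hc2p⟩ := hrepr (d * n) ⟨n, rfl⟩ le_rfl
    obtain ⟨c, hcv, hcp⟩ := hrepr (d * n + d * n) (Dvd.dvd.add ⟨n, rfl⟩ ⟨n, rfl⟩)
      (Nat.le_add_right _ _)
    set ℓ := ∑ i, c i with hℓ
    have hSle : d * n + d * n ≤ ℓ * m := by
      calc d * n + d * n = ∑ i, c i * r i := hcv.symm
        _ ≤ ∑ i, c i * m := Finset.sum_le_sum (fun i _ => Nat.mul_le_mul_left _ (hrm i))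
        _ = ℓ * m := (Finset.sum_mul _ _ _).symm
    have hc2lt : ∑ i, c2 i < ℓ := by
      have h1 : (∑ i, c2 i) * m < ℓ * m := by omega
      exact Nat.lt_of_mul_lt_mul_right h1
    set a := ℓ * n + (d * n + d * n) with ha
    have hmem1 : ∃ z, piM k n r z = a ∧ vlen z = ℓ := by
      rw [len_iff]
      exact ⟨c, le_rfl, by rw [hcv]⟩
    have hmem2 : ∃ z, piM k n r z = a ∧ vlen z = ℓ + d := by
      rw [len_iff]
      refine ⟨c2, by omega, ?_⟩
      rw [hc2v, ha]
      ring
    refine ⟨a, ℓ, ℓ + d, hmem1, hmem2, by omega, ?_, by omega⟩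
    intro m' h1 h2 hmem'
    have hdvd := hcong a ℓ m' h1.le hmem1 hmem'
    obtain ⟨t, ht⟩ := hdvd
    have h3 : 0 < m' - ℓ := by omega
    have h4 : m' - ℓ < d := by omega
    have h5 : 0 < t := by
      rcases Nat.eq_zero_or_pos t with h | h
      · subst h; simp at ht; omega
      · exact h
    have h6 : d ≤ d * t := Nat.le_mul_of_pos_right d h5
    omega
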